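/- Let γ ∈ (0, 1) and c₁, c₂ ∈ (0, 1) with c₁ ≤ c₂, c₂ − c₁ ≤ γ/6, and c₂ ≤ 1 − γ/2. Define Cournot duopoly equilibrium quantities q*_i = (2 − γ − 2c_i + γ c_{−i})/(4 − γ²) and the expected welfare W(c₁, c₂) = q*₁ + q*₂ − ((q*₁)² + (q*₂)² + 2γ q*₁ q*₂)/2 + B − c₁ q*₁ − c₂ q*₂ for a constant B. Then ∂W/∂c₂ = ((12 − γ²) c₂ − (8γ − γ³) c₁ − (12 − 8γ − γ² + γ³)) / (4 − γ²)², and this quantity is strictly negative. -/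

import Mathlib

/-- Expected welfare in the Cournot duopoly with substitutability `γ`, consumer budget
`B`, and marginal costs `c₁, c₂`, evaluated at the equilibrium quantities
`q*_i = (2 - γ - 2c_i + γ c_{-i})/(4 - γ²)`. -/
noncomputable def welfare (γ B c₁ c₂ : ℝ) : ℝ :=
  let q₁ := (2 - γ - 2 * c₁ + γ * c₂) / (4 - γ ^ 2)
  let q₂ := (2 - γ - 2 * c₂ + γ * c₁) / (4 - γ ^ 2)
  q₁ + q₂ - (q₁ ^ 2 + q₂ ^ 2 + 2 * γ * q₁ * q₂) / 2 + B - c₁ * q₁ - c₂ * q₂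

/-- **Welfare decreases in the larger cost (welfare analysis).** For `γ ∈ (0,1)` and
`c₁ ≤ c₂` in `(0,1)` with `c₂ - c₁ ≤ γ/6` and `c₂ ≤ 1 - γ/2`, the derivative of welfare
with respect to `c₂` equals
`((12 - γ²) c₂ - (8γ - γ³) c₁ - (12 - 8γ - γ² + γ³))/(4 - γ²)²`, and this quantity is
strictly negative. -/
theorem welfare_derivative_neg
    (γ B c₁ c₂ : ℝ) (hγ₁ : 0 < γ) (hγ₂ : γ < 1)
    (hc₁ : c₁ ∈ Set.Ioo (0 : ℝ) 1) (hc₂ : c₂ ∈ Set.Ioo (0 : ℝ) 1)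
    (hle : c₁ ≤ c₂) (hdiff : c₂ - c₁ ≤ γ / 6) (hbound : c₂ ≤ 1 - γ / 2) :
    HasDerivAt (fun c => welfare γ B c₁ c)
      (((12 - γ ^ 2) * c₂ - (8 * γ - γ ^ 3) * c₁ - (12 - 8 * γ - γ ^ 2 + γ ^ 3)) /
        (4 - γ ^ 2) ^ 2) c₂ ∧
    ((12 - γ ^ 2) * c₂ - (8 * γ - γ ^ 3) * c₁ - (12 - 8 * γ - γ ^ 2 + γ ^ 3)) /
        (4 - γ ^ 2) ^ 2 < 0 := by
  have hD : (4 : ℝ) - γ ^ 2 ≠ 0 := by nlinarith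
  constructor
  · have hq₁ : HasDerivAt (fun c : ℝ => (2 - γ - 2 * c₁ + γ * c) / (4 - γ ^ 2))
        (γ / (4 - γ ^ 2)) c₂ := by
      simpa using ((((hasDerivAt_id c₂).const_mul γ).const_add (2 - γ - 2 * c₁)).div_const
        (4 - γ ^ 2))
    have hq₂ : HasDerivAt (fun c : ℝ => (2 - γ - 2 * c + γ * c₁) / (4 - γ ^ 2))
        (-2 / (4 - γ ^ 2)) c₂ := by
      have : HasDerivAt (fun c : ℝ => (2 - γ - 2 * c + γ * c₁)) (-2) c₂ := by
        simpa using (((hasDerivAt_id c₂).const_mul (2:ℝ)).const_sub (2 - γ)).add_const (γ * c₁)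
      simpa using this.div_const (4 - γ ^ 2)
    have H := ((hq₁.add hq₂).sub
        ((((hq₁.pow 2).add (hq₂.pow 2)).add
          (((hq₁.const_mul (2 * γ)).mul hq₂))).div_const 2)).add_const B
    have H2 := (H.sub (hq₁.const_mul c₁)).sub ((hasDerivAt_id c₂).mul hq₂)
    refine H2.congr_deriv ?_
    simp only [id]
    norm_num
    field_simp
    ring
  · apply div_neg_of_neg_of_pos
    · have h1 : 0 < γ * (8 - γ ^ 2) := by nlinarith
      have h2 : 0 < 12 - 8 * γ - γ ^ 2 + γ ^ 3 := by nlinarith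
      have h3 : 0 ≤ γ * (8 - γ ^ 2) * (c₁ - c₂ + γ / 6) := by
        apply mul_nonneg h1.le; linarith
      have h4 : 0 ≤ (12 - 8 * γ - γ ^ 2 + γ ^ 3) * (1 - γ / 2 - c₂) := by
        apply mul_nonneg h2.le; linarith
      have h5 : 0 < γ * (36 - 32 * γ - 3 * γ ^ 2 + 4 * γ ^ 3) := by nlinarith
      nlinarith [h3, h4, h5]
    · positivity
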